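/- arXiv:2204.01646 — 2 statements merged into one kernel-verified Lean document; each statement's English description precedes it below -/
import Mathlib

section
/- Fix data $x_1, \ldots, x_n$, weights $w_i \in (0,1)$, and a bounded measurable kernel $u \mapsto k(x_i \mid u)$ for each $i$, with $m_{i-1}(x_i) > 0$ for all $i$, where $m_{i-1}$ are the exact PR normalizing constants. Let $U_1, U_2, \ldots$ be i.i.d. from $P_0$, and define the PRticle filter Monte Carlo normalizers $\hat m_{i-1,T}(x_i) = T^{-1}\sum_{t=1}^T k(x_i\mid U_t)\hat\Delta_{i,T}(U_t)$, where $\hat\Delta_{1,T} \equiv 1$ and $\hat\Delta_{i,T}(u) = \prod_{j=1}^{i-1}\{1 + w_j(k(x_j\mid u)/\hat m_{j-1,T}(x_j) - 1)\}$. Then for each $i \in \{1,\ldots,n\}$, $\hat m_{i-1,T}(x_i) \to m_{i-1}(x_i)$ with $P_0$-probability 1 as $T \to \infty$. -/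
open MeasureTheory Filter Finset

/-- Auxiliary: a bounded measurable real function is integrable w.r.t. a finite measure. -/
lemma prt_integrable {α : Type*} [MeasurableSpace α] (μ : Measure α) [IsFiniteMeasure μ]
    (f : α → ℝ) (B : ℝ) (hf : Measurable f) (hB : ∀ x, |f x| ≤ B) : Integrable f μ :=
  (integrable_const B).mono' hf.aestronglyMeasurable (ae_of_all _ fun x => by
    simpa using hB x)

/-- Auxiliary: product of kernels over a finite index set. -/
noncomputable def PRg {𝕌 : Type*} (k : ℕ → 𝕌 → ℝ) (S : Finset ℕ) (u : 𝕌) : ℝ :=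
  ∏ j ∈ S, k j u

lemma PRg_singleton {𝕌 : Type*} (k : ℕ → 𝕌 → ℝ) (i : ℕ) (u : 𝕌) :
    PRg k {i} u = k i u := by simp [PRg]

lemma PRg_insert {𝕌 : Type*} (k : ℕ → 𝕌 → ℝ) {S : Finset ℕ} {i : ℕ} (hi : i ∉ S) (u : 𝕌) :
    PRg k (insert i S) u = k i u * PRg k S u := by
  simp [PRg, Finset.prod_insert hi]

/-- Almost-sure consistency of the PRticle filter Monte Carlo normalizing constants:
with bounded kernels, each nested Monte Carlo normalizer `m̂_{i-1,T}(x_i)` converges to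
the exact PR normalizer `m_{i-1}(x_i)` with `P₀`-probability one as `T → ∞`.
Indexing is 0-based: step `i` here uses data point `x_{i+1}`, weight `w_{i+1}`, etc. -/
theorem stmt10 {Ω 𝕌 : Type*} [MeasurableSpace Ω] [MeasurableSpace 𝕌]
    (ℙ : Measure Ω) [IsProbabilityMeasure ℙ]
    (P0 : Measure 𝕌) [IsProbabilityMeasure P0]
    (n : ℕ)
    -- kernels `u ↦ k(x_{i+1} | u)`, bounded, nonnegative, measurable
    (k : ℕ → 𝕌 → ℝ) (hkm : ∀ i, Measurable (k i)) (hknn : ∀ i u, 0 ≤ k i u)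
    (hkbd : ∀ i, i < n → ∃ C : ℝ, ∀ u, k i u ≤ C)
    -- weights
    (w : ℕ → ℝ) (hw : ∀ i, i < n → 0 < w i ∧ w i < 1)
    -- exact PR quantities: `Δ i` is the exact product of factors, `m i` the exact
    -- normalizing constant `m_{i}(x_{i+1}) = ∫ k_i Δ_i dP₀`
    (Δ : ℕ → 𝕌 → ℝ) (m : ℕ → ℝ)
    (hΔ0 : ∀ u, Δ 0 u = 1)
    (hΔ : ∀ i u, Δ (i + 1) u = Δ i u * (1 + w i * (k i u / m i - 1)))
    (hm : ∀ i, m i = ∫ u, k i u * Δ i u ∂P0)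
    (hmpos : ∀ i, i < n → 0 < m i)
    -- particles: i.i.d. from `P₀`
    (U : ℕ → Ω → 𝕌) (hU : ∀ t, Measurable (U t))
    (hindep : ProbabilityTheory.iIndepFun U ℙ)
    (hlaw : ∀ t, Measure.map (U t) ℙ = P0)
    -- Monte Carlo quantities: `Δ̂ i T ω` and `m̂ i T ω`
    (Δhat : ℕ → ℕ → Ω → 𝕌 → ℝ) (mhat : ℕ → ℕ → Ω → ℝ)
    (hΔhat0 : ∀ T ω u, Δhat 0 T ω u = 1)
    (hΔhat : ∀ i T ω u,
      Δhat (i + 1) T ω u = Δhat i T ω u * (1 + w i * (k i u / mhat i T ω - 1)))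
    (hmhat : ∀ i T ω,
      mhat i T ω = (T : ℝ)⁻¹ * ∑ t ∈ Finset.range T, k i (U t ω) * Δhat i T ω (U t ω)) :
    ∀ᵐ ω ∂ℙ, ∀ i, i < n → Tendsto (fun T => mhat i T ω) atTop (nhds (m i)) := by
  classical
  -- nonnegative bounds for kernels
  have hCex : ∀ i, ∃ C : ℝ, 0 ≤ C ∧ (i < n → ∀ u, k i u ≤ C) := by
    intro i
    by_cases hi : i < n
    · obtain ⟨C, hCk⟩ := hkbd i hi
      exact ⟨max C 0, le_max_right _ _, fun _ u => (hCk u).trans (le_max_left _ _)⟩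
    · exact ⟨0, le_rfl, fun h => absurd h hi⟩
  choose C hC0 hCk using hCex
  -- basic facts about the product kernels
  have hgm : ∀ S : Finset ℕ, Measurable (PRg k S) := by
    intro S
    exact Finset.measurable_prod _ fun j _ => hkm j
  have hg0 : ∀ (S : Finset ℕ) u, 0 ≤ PRg k S u := fun S u =>
    Finset.prod_nonneg fun j _ => hknn j u
  have hgbd : ∀ S : Finset ℕ, S ⊆ range n → ∀ u, PRg k S u ≤ ∏ j ∈ S, C j := by
    intro S hS u
    exact Finset.prod_le_prod (fun j _ => hknn j u)
      (fun j hj => hCk j (mem_range.1 (hS hj)) u)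
  have hGS0 : ∀ S : Finset ℕ, 0 ≤ ∏ j ∈ S, C j := fun S =>
    Finset.prod_nonneg fun j _ => hC0 j
  -- measurability of exact Δ
  have hΔm : ∀ i, Measurable (Δ i) := by
    intro i
    induction i with
    | zero =>
      have : Δ 0 = fun _ => (1 : ℝ) := funext hΔ0
      rw [this]; exact measurable_const
    | succ i ih =>
      have : Δ (i + 1) = fun u => Δ i u * (1 + w i * (k i u / m i - 1)) := funext (hΔ i)
      rw [this]
      exact ih.mul (measurable_const.add (measurable_const.mul
        (((hkm i).div_const _).sub measurable_const)))
  -- boundedness of exact Δ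
  have hΔbd : ∀ i, i ≤ n → ∃ D : ℝ, 0 ≤ D ∧ ∀ u, |Δ i u| ≤ D := by
    intro i
    induction i with
    | zero =>
      exact fun _ => ⟨1, zero_le_one, fun u => by rw [hΔ0 u]; simp⟩
    | succ i ih =>
      intro hi
      obtain ⟨D, hD0, hD⟩ := ih (Nat.le_of_succ_le hi)
      have hin : i < n := Nat.lt_of_succ_le hi
      obtain ⟨hw1, hw2⟩ := hw i hin
      have hmi := hmpos i hin
      have hCm : 0 ≤ C i / m i := div_nonneg (hC0 i) hmi.le
      refine ⟨D * (1 + w i * (C i / m i + 1)), ?_, ?_⟩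
      · apply mul_nonneg hD0; nlinarith
      · intro u
        rw [hΔ i u, abs_mul]
        have hx0 : 0 ≤ k i u / m i := div_nonneg (hknn i u) hmi.le
        have hx1 : k i u / m i ≤ C i / m i :=
          (div_le_div_iff_of_pos_right hmi).mpr (hCk i hin u)
        have hfac : |1 + w i * (k i u / m i - 1)| ≤ 1 + w i * (C i / m i + 1) := by
          rw [abs_le]; constructor <;> nlinarith
        exact mul_le_mul (hD u) hfac (abs_nonneg _) hD0
  -- integrability of g_S * Δ i
  have hintSΔ : ∀ i, i ≤ n → ∀ S : Finset ℕ, S ⊆ range n →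
      Integrable (fun u => PRg k S u * Δ i u) P0 := by
    intro i hi S hS
    obtain ⟨D, hD0, hD⟩ := hΔbd i hi
    apply prt_integrable P0 _ ((∏ j ∈ S, C j) * D) ((hgm S).mul (hΔm i))
    intro u
    rw [Pi.mul_apply, abs_mul, abs_of_nonneg (hg0 S u)]
    exact mul_le_mul (hgbd S hS u) (hD u) (abs_nonneg _) (hGS0 S)
  -- strong law of large numbers for each product kernel
  have hslln : ∀ S : Finset ℕ, S ⊆ range n →
      ∀ᵐ ω ∂ℙ, Tendsto (fun T : ℕ => (∑ t ∈ range T, PRg k S (U t ω)) / T)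
        atTop (nhds (∫ u, PRg k S u ∂P0)) := by
    intro S hS
    have hXm : ∀ t, Measurable (fun ω => PRg k S (U t ω)) := fun t => (hgm S).comp (hU t)
    have hmap : ∀ t, Measure.map (fun ω => PRg k S (U t ω)) ℙ = Measure.map (PRg k S) P0 := by
      intro t
      rw [← hlaw t, Measure.map_map (hgm S) (hU t)]
      rfl
    have hident : ∀ t, ProbabilityTheory.IdentDistrib
        (fun ω => PRg k S (U t ω)) (fun ω => PRg k S (U 0 ω)) ℙ ℙ := fun t =>
      ⟨(hXm t).aemeasurable, (hXm 0).aemeasurable, by rw [hmap t, hmap 0]⟩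
    have hpind : Pairwise (Function.onFun (ProbabilityTheory.IndepFun · · ℙ) fun t ω => PRg k S (U t ω)) := by
      intro s t hst
      exact (hindep.indepFun hst).comp (hgm S) (hgm S)
    have hintX : Integrable (fun ω => PRg k S (U 0 ω)) ℙ := by
      apply prt_integrable ℙ _ (∏ j ∈ S, C j) (hXm 0)
      intro ω
      rw [abs_of_nonneg (hg0 S _)]
      exact hgbd S hS _
    have := ProbabilityTheory.strong_law_ae_real (fun t ω => PRg k S (U t ω)) hintX hpind hident
    have hEq : (∫ ω, PRg k S (U 0 ω) ∂ℙ) = ∫ u, PRg k S u ∂P0 := by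
      rw [← hlaw 0, integral_map (hU 0).aemeasurable (hgm S).aestronglyMeasurable]
    rw [hEq] at this
    exact this
  -- all the SLLN events simultaneously
  have hae : ∀ᵐ ω ∂ℙ, ∀ S : Finset ℕ, S ⊆ range n →
      Tendsto (fun T : ℕ => (∑ t ∈ range T, PRg k S (U t ω)) / T)
        atTop (nhds (∫ u, PRg k S u ∂P0)) := by
    rw [ae_all_iff]
    intro S
    by_cases hS : S ⊆ range n
    · filter_upwards [hslln S hS] with ω h _
      exact h
    · exact ae_of_all _ fun ω h => absurd h hS
  filter_upwards [hae] with ω hω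
  -- main induction
  have key : ∀ i, i ≤ n → ∀ S : Finset ℕ, S ⊆ range n → (∀ j ∈ S, i ≤ j) →
      Tendsto (fun T : ℕ => (T : ℝ)⁻¹ * ∑ t ∈ range T, PRg k S (U t ω) * Δhat i T ω (U t ω))
        atTop (nhds (∫ u, PRg k S u * Δ i u ∂P0)) := by
    intro i
    induction i with
    | zero =>
      intro _ S hS _
      have h1 : (fun T : ℕ => (T : ℝ)⁻¹ * ∑ t ∈ range T, PRg k S (U t ω) * Δhat 0 T ω (U t ω))
          = fun T : ℕ => (∑ t ∈ range T, PRg k S (U t ω)) / T := by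
        funext T
        rw [div_eq_inv_mul]
        congr 1
        exact Finset.sum_congr rfl fun t _ => by rw [hΔhat0, mul_one]
      have h2 : (∫ u, PRg k S u * Δ 0 u ∂P0) = ∫ u, PRg k S u ∂P0 := by
        simp only [hΔ0, mul_one]
      rw [h1, h2]
      exact hω S hS
    | succ i ih =>
      intro hi S hS hSi
      have hin : i < n := Nat.lt_of_succ_le hi
      have hiS : i ∉ S := fun h => by have := hSi i h; omega
      have hsub : insert i S ⊆ range n := by
        intro j hj
        rcases Finset.mem_insert.1 hj with h | h
        · exact mem_range.2 (h ▸ hin)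
        · exact hS h
      have hIH1 := ih (Nat.le_of_succ_le hi) S hS
        (fun j hj => le_of_lt (Nat.lt_of_succ_le (hSi j hj)))
      have hIH2 := ih (Nat.le_of_succ_le hi) (insert i S) hsub (by
        intro j hj
        rcases Finset.mem_insert.1 hj with h | h
        · omega
        · exact le_of_lt (Nat.lt_of_succ_le (hSi j h)))
      have hIHm := ih (Nat.le_of_succ_le hi) {i}
        (Finset.singleton_subset_iff.2 (mem_range.2 hin)) (by
          intro j hj
          rw [Finset.mem_singleton] at hj
          omega)
      -- mhat i converges to m i
      have hmA : ∀ T, mhat i T ω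
          = (T : ℝ)⁻¹ * ∑ t ∈ range T, PRg k {i} (U t ω) * Δhat i T ω (U t ω) := by
        intro T
        rw [hmhat]
        congr 1
        exact Finset.sum_congr rfl fun t _ => by rw [PRg_singleton]
      have hmint : (∫ u, PRg k {i} u * Δ i u ∂P0) = m i := by
        rw [hm i]
        simp only [PRg_singleton]
      have hmconv : Tendsto (fun T => mhat i T ω) atTop (nhds (m i)) := by
        rw [← hmint]
        exact Tendsto.congr (fun T => (hmA T).symm) hIHm
      have hdiv : Tendsto (fun T => w i / mhat i T ω) atTop (nhds (w i / m i)) :=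
        Tendsto.div tendsto_const_nhds hmconv (ne_of_gt (hmpos i hin))
      -- algebraic decomposition of the Monte Carlo average
      have halg : ∀ T : ℕ,
          (T : ℝ)⁻¹ * ∑ t ∈ range T, PRg k S (U t ω) * Δhat (i + 1) T ω (U t ω)
          = (1 - w i) * ((T : ℝ)⁻¹ * ∑ t ∈ range T, PRg k S (U t ω) * Δhat i T ω (U t ω))
            + (w i / mhat i T ω)
              * ((T : ℝ)⁻¹ * ∑ t ∈ range T, PRg k (insert i S) (U t ω) * Δhat i T ω (U t ω)) := by
        intro T
        have hpt : ∀ t, PRg k S (U t ω) * Δhat (i + 1) T ω (U t ω)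
            = (1 - w i) * (PRg k S (U t ω) * Δhat i T ω (U t ω))
              + (w i / mhat i T ω) * (PRg k (insert i S) (U t ω) * Δhat i T ω (U t ω)) := by
          intro t
          rw [hΔhat, PRg_insert k hiS]
          ring
        rw [Finset.sum_congr rfl fun t _ => hpt t, Finset.sum_add_distrib,
          ← Finset.mul_sum, ← Finset.mul_sum]
        ring
      -- identify the limit
      have hlim : (∫ u, PRg k S u * Δ (i + 1) u ∂P0)
          = (1 - w i) * (∫ u, PRg k S u * Δ i u ∂P0)
            + (w i / m i) * (∫ u, PRg k (insert i S) u * Δ i u ∂P0) := by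
        have hint1 := hintSΔ i (Nat.le_of_succ_le hi) S hS
        have hint2 := hintSΔ i (Nat.le_of_succ_le hi) (insert i S) hsub
        rw [← integral_const_mul, ← integral_const_mul,
          ← integral_add (hint1.const_mul _) (hint2.const_mul _)]
        apply integral_congr_ae
        apply ae_of_all
        intro u
        simp only [hΔ, PRg_insert k hiS]
        have hm0 : m i ≠ 0 := ne_of_gt (hmpos i hin)
        field_simp
        ring
      rw [hlim]
      exact Tendsto.congr (fun T => (halg T).symm)
        ((hIH1.const_mul (1 - w i)).add (hdiv.mul hIH2))
  -- conclude
  intro i hi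
  have h := key i hi.le {i} (Finset.singleton_subset_iff.2 (mem_range.2 hi)) (by
    intro j hj
    rw [Finset.mem_singleton] at hj
    omega)
  have hmint : (∫ u, PRg k {i} u * Δ i u ∂P0) = m i := by
    rw [hm i]
    simp only [PRg_singleton]
  rw [hmint] at h
  apply Tendsto.congr ?_ h
  intro T
  rw [hmhat]
  congr 1
  exact Finset.sum_congr rfl fun t _ => by rw [PRg_singleton]
end

section
/- Under the hypotheses of the PRticle filter convergence (fixed data $x_1,\ldots,x_n$, weights $w_i\in(0,1)$, kernels with $\int \prod_{i\in S}k(x_i\mid u)\,P_0(du) < \infty$ for every subset $S \subseteq \{1,\ldots,n\}$, and positive exact normalizers $m_{i-1}(x_i) > 0$), the PRticle filter density approximation $\hat p_{n,T}(u) = p_0(u)\prod_{i=1}^n\{1 + w_i(k(x_i\mid u)/\hat m_{i-1,T}(x_i) - 1)\}$ satisfies $\int |\hat p_{n,T}(u) - p_n(u)|\,du \to 0$ with $P_0$-probability 1 as $T \to \infty$, where $p_n$ is the exact PR density estimate. -/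
open MeasureTheory Filter Finset

/-- Coefficient of the subset `S` in the expansion of the PR product with
denominators `q`. -/
noncomputable def prCoef (w q : ℕ → ℝ) (i : ℕ) (S : Finset ℕ) : ℝ :=
  (∏ j ∈ S, w j / q j) * ∏ j ∈ Finset.range i \ S, (1 - w j)

/-- Expansion of the PR product over subsets. -/
lemma prExpand (w q kk : ℕ → ℝ) (i : ℕ) :
    ∏ j ∈ Finset.range i, (1 + w j * (kk j / q j - 1))
      = ∑ S ∈ (Finset.range i).powerset, prCoef w q i S * ∏ j ∈ S, kk j := by
  have h : ∀ j, 1 + w j * (kk j / q j - 1) = (w j / q j) * kk j + (1 - w j) := fun j => by ring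
  simp_rw [h, Finset.prod_add, Finset.prod_mul_distrib, prCoef]
  exact Finset.sum_congr rfl fun S _ => by ring

/-- Strong law of large numbers in the form needed for the PRticle filter. -/
lemma prSLLN {Ω 𝕌 : Type*} [MeasurableSpace Ω] [MeasurableSpace 𝕌]
    (ℙ : Measure Ω) [IsProbabilityMeasure ℙ] (P0 : Measure 𝕌)
    (f : 𝕌 → ℝ) (hf : Measurable f) (hint : Integrable f P0)
    (U : ℕ → Ω → 𝕌) (hU : ∀ t, Measurable (U t))
    (hindep : ProbabilityTheory.iIndepFun U ℙ)
    (hlaw : ∀ t, Measure.map (U t) ℙ = P0) :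
    ∀ᵐ ω ∂ℙ, Tendsto (fun T : ℕ => (T : ℝ)⁻¹ * ∑ t ∈ Finset.range T, f (U t ω))
      atTop (nhds (∫ u, f u ∂P0)) := by
  have hint0 : Integrable (fun ω => f (U 0 ω)) ℙ := by
    have : Integrable f (Measure.map (U 0) ℙ) := by rw [hlaw]; exact hint
    exact ((integrable_map_measure hf.aestronglyMeasurable (hU 0).aemeasurable).mp this)
  have hid : ∀ t, ProbabilityTheory.IdentDistrib (fun ω => f (U t ω)) (fun ω => f (U 0 ω)) ℙ ℙ := by
    intro t
    have hUid : ProbabilityTheory.IdentDistrib (U t) (U 0) ℙ ℙ :=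
      ⟨(hU t).aemeasurable, (hU 0).aemeasurable, by rw [hlaw, hlaw]⟩
    exact hUid.comp hf
  have hpind : Pairwise (Function.onFun (ProbabilityTheory.IndepFun · · ℙ) fun t ω => f (U t ω)) := by
    intro i j hij
    exact (hindep.indepFun hij).comp hf hf
  have hlim : (∫ ω, f (U 0 ω) ∂ℙ) = ∫ u, f u ∂P0 := by
    rw [← hlaw 0, integral_map (hU 0).aemeasurable hf.aestronglyMeasurable]
  have := ProbabilityTheory.strong_law_ae_real (fun t ω => f (U t ω)) hint0 hpind hid
  filter_upwards [this] with ω hω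
  rw [hlim] at hω
  convert hω using 2 with T
  rw [inv_mul_eq_div]

/-- Theorem 1 of the paper (PRticle filter convergence): for fixed data, under the
integrability condition `∫ ∏_{i∈S} k(x_i|u) P₀(du) < ∞` for every subset `S`, the
PRticle filter density approximation `p̂_{n,T}` converges in `L¹` to the exact PR
density `p_n`, with `P₀`-probability one, as the number of particles `T → ∞`.
Indexing is 0-based: step `i` here uses data point `x_{i+1}`, weight `w_{i+1}`, etc. -/
theorem stmt11 {Ω 𝕌 : Type*} [MeasurableSpace Ω] [MeasurableSpace 𝕌]
    (ℙ : Measure Ω) [IsProbabilityMeasure ℙ]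
    (μ : Measure 𝕌) [SigmaFinite μ]
    -- initial guess `P₀` with density `p₀` w.r.t. `μ`
    (p0 : 𝕌 → ℝ) (hp0m : Measurable p0) (hp0nn : ∀ u, 0 ≤ p0 u)
    (P0 : Measure 𝕌) [IsProbabilityMeasure P0]
    (hP0 : P0 = μ.withDensity (fun u => ENNReal.ofReal (p0 u)))
    (n : ℕ)
    -- kernels `u ↦ k(x_{i+1} | u)`, nonnegative and measurable
    (k : ℕ → 𝕌 → ℝ) (hkm : ∀ i, Measurable (k i)) (hknn : ∀ i u, 0 ≤ k i u)
    -- integrability condition (5): every subset-product of kernels is `P₀`-integrable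
    (hkint : ∀ S : Finset ℕ, S ⊆ Finset.range n →
      Integrable (fun u => ∏ i ∈ S, k i u) P0)
    -- weights
    (w : ℕ → ℝ) (hw : ∀ i, i < n → 0 < w i ∧ w i < 1)
    -- exact PR quantities: product factors `Δ` and normalizers `m`
    (Δ : ℕ → 𝕌 → ℝ) (m : ℕ → ℝ)
    (hΔ0 : ∀ u, Δ 0 u = 1)
    (hΔ : ∀ i u, Δ (i + 1) u = Δ i u * (1 + w i * (k i u / m i - 1)))
    (hm : ∀ i, m i = ∫ u, k i u * Δ i u ∂P0)
    (hmpos : ∀ i, i < n → 0 < m i)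
    -- the exact PR density estimate
    (pn : 𝕌 → ℝ)
    (hpn : ∀ u, pn u = p0 u * ∏ i ∈ Finset.range n, (1 + w i * (k i u / m i - 1)))
    -- particles: i.i.d. from `P₀`
    (U : ℕ → Ω → 𝕌) (hU : ∀ t, Measurable (U t))
    (hindep : ProbabilityTheory.iIndepFun U ℙ)
    (hlaw : ∀ t, Measure.map (U t) ℙ = P0)
    -- Monte Carlo quantities `Δ̂` and `m̂`
    (Δhat : ℕ → ℕ → Ω → 𝕌 → ℝ) (mhat : ℕ → ℕ → Ω → ℝ)
    (hΔhat0 : ∀ T ω u, Δhat 0 T ω u = 1)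
    (hΔhat : ∀ i T ω u,
      Δhat (i + 1) T ω u = Δhat i T ω u * (1 + w i * (k i u / mhat i T ω - 1)))
    (hmhat : ∀ i T ω,
      mhat i T ω = (T : ℝ)⁻¹ * ∑ t ∈ Finset.range T, k i (U t ω) * Δhat i T ω (U t ω))
    -- the PRticle filter density approximation
    (pnhat : ℕ → Ω → 𝕌 → ℝ)
    (hpnhat : ∀ T ω u, pnhat T ω u
      = p0 u * ∏ i ∈ Finset.range n, (1 + w i * (k i u / mhat i T ω - 1))) :
    ∀ᵐ ω ∂ℙ, Tendsto (fun T => ∫ u, |pnhat T ω u - pn u| ∂μ) atTop (nhds 0) := by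
  -- measurability of subset-products of kernels
  have hKm : ∀ S : Finset ℕ, Measurable (fun u => ∏ j ∈ S, k j u) :=
    fun S => Finset.measurable_prod S fun j _ => hkm j
  -- the strong law of large numbers for each subset-product simultaneously
  have hA : ∀ᵐ ω ∂ℙ, ∀ R : Finset ℕ, R ⊆ Finset.range n →
      Tendsto (fun T : ℕ => (T : ℝ)⁻¹ * ∑ t ∈ Finset.range T, ∏ j ∈ R, k j (U t ω)) atTop
        (nhds (∫ u, ∏ j ∈ R, k j u ∂P0)) := by
    rw [ae_all_iff]
    intro R
    by_cases hR : R ⊆ Finset.range n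
    · exact (prSLLN ℙ P0 _ (hKm R) (hkint R hR) U hU hindep hlaw).mono fun ω h _ => h
    · exact Eventually.of_forall fun ω h => absurd h hR
  -- closed product form of Δ and Δhat
  have hΔprod : ∀ i u, Δ i u = ∏ j ∈ Finset.range i, (1 + w j * (k j u / m j - 1)) := by
    intro i u
    induction i with
    | zero => simpa using hΔ0 u
    | succ i ih => rw [hΔ i u, ih, Finset.prod_range_succ]
  have hΔhatprod : ∀ i T ω u,
      Δhat i T ω u = ∏ j ∈ Finset.range i, (1 + w j * (k j u / mhat j T ω - 1)) := by
    intro i T ω u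
    induction i with
    | zero => simpa using hΔhat0 T ω u
    | succ i ih => rw [hΔhat i T ω u, ih, Finset.prod_range_succ]
  -- pointwise expansions
  have hΔexp : ∀ i u, Δ i u
      = ∑ S ∈ (Finset.range i).powerset, prCoef w m i S * ∏ j ∈ S, k j u := by
    intro i u; rw [hΔprod i u, prExpand]
  have hΔhatexp : ∀ i T ω u, Δhat i T ω u
      = ∑ S ∈ (Finset.range i).powerset,
          prCoef w (fun j => mhat j T ω) i S * ∏ j ∈ S, k j u := by
    intro i T ω u; rw [hΔhatprod i T ω u, prExpand]
  -- auxiliary: `i ∉ S` for `S` in the powerset of `range i`; insertion facts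
  have hnotmem : ∀ i, ∀ S ∈ (Finset.range i).powerset, i ∉ S := by
    intro i S hS h
    simpa using Finset.mem_powerset.mp hS h
  have hsubn : ∀ i, i < n → ∀ S ∈ (Finset.range i).powerset,
      insert i S ⊆ Finset.range n := by
    intro i hi S hS
    exact Finset.insert_subset (Finset.mem_range.mpr hi)
      ((Finset.mem_powerset.mp hS).trans (Finset.range_subset_range.mpr hi.le))
  -- expansion of `k i u * Δ i u` and its hat version
  have hkΔ : ∀ i u, k i u * Δ i u = ∑ S ∈ (Finset.range i).powerset,
      prCoef w m i S * ∏ j ∈ insert i S, k j u := by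
    intro i u
    rw [hΔexp i u, Finset.mul_sum]
    refine Finset.sum_congr rfl fun S hS => ?_
    rw [Finset.prod_insert (hnotmem i S hS)]; ring
  have hkΔhat : ∀ i T ω u, k i u * Δhat i T ω u = ∑ S ∈ (Finset.range i).powerset,
      prCoef w (fun j => mhat j T ω) i S * ∏ j ∈ insert i S, k j u := by
    intro i T ω u
    rw [hΔhatexp i T ω u, Finset.mul_sum]
    refine Finset.sum_congr rfl fun S hS => ?_
    rw [Finset.prod_insert (hnotmem i S hS)]; ring
  -- identity for the exact normalizers
  have hmid : ∀ i, i < n → m i = ∑ S ∈ (Finset.range i).powerset,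
      prCoef w m i S * ∫ u, ∏ j ∈ insert i S, k j u ∂P0 := by
    intro i hi
    rw [hm i]
    simp_rw [hkΔ i]
    rw [integral_finset_sum _ (fun S hS => (hkint _ (hsubn i hi S hS)).const_mul _)]
    exact Finset.sum_congr rfl fun S _ => integral_const_mul _ _
  -- identity for the Monte Carlo normalizers
  have hmhatid : ∀ i T ω, mhat i T ω = ∑ S ∈ (Finset.range i).powerset,
      prCoef w (fun j => mhat j T ω) i S *
        ((T : ℝ)⁻¹ * ∑ t ∈ Finset.range T, ∏ j ∈ insert i S, k j (U t ω)) := by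
    intro i T ω
    rw [hmhat i T ω]
    simp_rw [hkΔhat i T ω]
    rw [Finset.sum_comm]
    simp_rw [← Finset.mul_sum]
    rw [Finset.mul_sum]
    exact Finset.sum_congr rfl fun S _ => by ring
  -- integrability and integral identities for `p0 * ∏ k` w.r.t. `μ`
  have hmeasNN : Measurable fun u => (p0 u).toNNReal := hp0m.real_toNNReal
  have hsmul : ∀ S : Finset ℕ, (fun u => (p0 u).toNNReal • ∏ j ∈ S, k j u)
      = fun u => p0 u * ∏ j ∈ S, k j u := by
    intro S
    funext u
    simp [NNReal.smul_def, Real.coe_toNNReal _ (hp0nn u)]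
  have hPint : ∀ S, S ⊆ Finset.range n → Integrable (fun u => p0 u * ∏ j ∈ S, k j u) μ := by
    intro S hS
    have h := hkint S hS
    rw [hP0] at h
    rw [show (fun u => ENNReal.ofReal (p0 u)) = fun u => ((p0 u).toNNReal : ENNReal) from rfl,
      integrable_withDensity_iff_integrable_smul hmeasNN] at h
    rwa [hsmul S] at h
  have hPeq : ∀ S : Finset ℕ, (∫ u, ∏ j ∈ S, k j u ∂P0) = ∫ u, p0 u * ∏ j ∈ S, k j u ∂μ := by
    intro S
    rw [hP0,
      show (fun u => ENNReal.ofReal (p0 u)) = fun u => ((p0 u).toNNReal : ENNReal) from rfl,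
      integral_withDensity_eq_integral_smul hmeasNN, hsmul S]
  -- main a.e. argument
  filter_upwards [hA] with ω hω
  -- convergence of the Monte Carlo normalizers
  have hmc : ∀ i, i < n → Tendsto (fun T => mhat i T ω) atTop (nhds (m i)) := by
    intro i
    induction i using Nat.strong_induction_on with
    | _ i IH =>
      intro hi
      have hform : (fun T => mhat i T ω) = fun T => ∑ S ∈ (Finset.range i).powerset,
          prCoef w (fun j => mhat j T ω) i S *
            ((T : ℝ)⁻¹ * ∑ t ∈ Finset.range T, ∏ j ∈ insert i S, k j (U t ω)) :=
        funext fun T => hmhatid i T ω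
      rw [hform, hmid i hi]
      refine tendsto_finset_sum _ fun S hS => Tendsto.mul ?_ (hω _ (hsubn i hi S hS))
      simp only [prCoef]
      refine Tendsto.mul_const _ (tendsto_finset_prod _ fun j hj => ?_)
      have hji : j < i := Finset.mem_range.mp (Finset.mem_powerset.mp hS hj)
      have hjn : j < n := hji.trans hi
      exact Tendsto.div tendsto_const_nhds (IH j hji hjn) (ne_of_gt (hmpos j hjn))
  -- convergence of the top-level coefficients
  have hcoef : ∀ S ∈ (Finset.range n).powerset,
      Tendsto (fun T => prCoef w (fun j => mhat j T ω) n S) atTop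
        (nhds (prCoef w m n S)) := by
    intro S hS
    simp only [prCoef]
    refine Tendsto.mul_const _ (tendsto_finset_prod _ fun j hj => ?_)
    have hjn : j < n := Finset.mem_range.mp (Finset.mem_powerset.mp hS hj)
    exact Tendsto.div tendsto_const_nhds (hmc j hjn) (ne_of_gt (hmpos j hjn))
  -- the dominating sequence
  set g : ℕ → ℝ := fun T => ∑ S ∈ (Finset.range n).powerset,
      |prCoef w (fun j => mhat j T ω) n S - prCoef w m n S| * ∫ u, ∏ j ∈ S, k j u ∂P0
    with hg
  -- pointwise bound
  have hptw : ∀ T u, |pnhat T ω u - pn u| ≤ ∑ S ∈ (Finset.range n).powerset,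
      |prCoef w (fun j => mhat j T ω) n S - prCoef w m n S| * (p0 u * ∏ j ∈ S, k j u) := by
    intro T u
    have hdiff : pnhat T ω u - pn u = p0 u * ∑ S ∈ (Finset.range n).powerset,
        (prCoef w (fun j => mhat j T ω) n S - prCoef w m n S) * ∏ j ∈ S, k j u := by
      rw [hpnhat T ω u, hpn u, prExpand, prExpand, ← mul_sub]
      congr 1
      rw [← Finset.sum_sub_distrib]
      exact Finset.sum_congr rfl fun S _ => by ring
    rw [hdiff, abs_mul, abs_of_nonneg (hp0nn u)]
    calc p0 u * |∑ S ∈ (Finset.range n).powerset,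
          (prCoef w (fun j => mhat j T ω) n S - prCoef w m n S) * ∏ j ∈ S, k j u|
        ≤ p0 u * ∑ S ∈ (Finset.range n).powerset,
          |(prCoef w (fun j => mhat j T ω) n S - prCoef w m n S) * ∏ j ∈ S, k j u| :=
          mul_le_mul_of_nonneg_left (Finset.abs_sum_le_sum_abs _ _) (hp0nn u)
      _ = ∑ S ∈ (Finset.range n).powerset,
          |prCoef w (fun j => mhat j T ω) n S - prCoef w m n S| * (p0 u * ∏ j ∈ S, k j u) := by
          rw [Finset.mul_sum]
          refine Finset.sum_congr rfl fun S hS => ?_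
          rw [abs_mul, abs_of_nonneg (Finset.prod_nonneg fun j _ => hknn j u)]
          ring
  -- the integral bound
  have hbound : ∀ T, ∫ u, |pnhat T ω u - pn u| ∂μ ≤ g T := by
    intro T
    have hgint : Integrable (fun u => ∑ S ∈ (Finset.range n).powerset,
        |prCoef w (fun j => mhat j T ω) n S - prCoef w m n S| * (p0 u * ∏ j ∈ S, k j u)) μ :=
      integrable_finset_sum _ fun S hS =>
        ((hPint S (Finset.mem_powerset.mp hS)).const_mul _)
    have h1 : (∫ u, |pnhat T ω u - pn u| ∂μ) ≤ ∫ u, ∑ S ∈ (Finset.range n).powerset,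
        |prCoef w (fun j => mhat j T ω) n S - prCoef w m n S| * (p0 u * ∏ j ∈ S, k j u) ∂μ :=
      integral_mono_of_nonneg (Eventually.of_forall fun u => abs_nonneg _) hgint
        (Eventually.of_forall fun u => hptw T u)
    refine h1.trans_eq ?_
    rw [integral_finset_sum _ (fun S hS =>
      ((hPint S (Finset.mem_powerset.mp hS)).const_mul _))]
    exact Finset.sum_congr rfl fun S hS => by rw [integral_const_mul, hPeq S]
  -- the dominating sequence tends to zero
  have hg0 : Tendsto g atTop (nhds 0) := by
    have : Tendsto g atTop (nhds (∑ S ∈ (Finset.range n).powerset,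
        |prCoef w m n S - prCoef w m n S| * ∫ u, ∏ j ∈ S, k j u ∂P0)) := by
      refine tendsto_finset_sum _ fun S hS => Tendsto.mul_const _ ?_
      exact ((hcoef S hS).sub tendsto_const_nhds).abs
    simpa using this
  exact squeeze_zero (fun T => integral_nonneg fun u => abs_nonneg _) hbound hg0
end
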